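/- Let G be a nontrivial group (there exists g ∈ G with g ≠ 1). Then the set D = {v : Fin 2 → G | v 0 = 1 ∨ v 1 = 1} is not an algebraic set over G; that is, there is no subset T of the free group FreeGroup (Fin 2) such that D = {v : Fin 2 → G | ∀ w ∈ T, FreeGroup.lift v w = 1}. (Hence no nontrivial group is an equational domain in the variety of all groups.) -/
import Mathlib


theorem union_of_axes_not_algebraic_over_nontrivial_group
    (G : Type*) [Group G] (hG : ∃ g : G, g ≠ 1) :
    ¬ ∃ T : Set (FreeGroup (Fin 2)),
      {v : Fin 2 → G | v 0 = 1 ∨ v 1 = 1} =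
        {v : Fin 2 → G | ∀ w ∈ T, FreeGroup.lift v w = 1} := by
  rintro ⟨T, hT⟩
  obtain ⟨g, hg⟩ := hG
  have hmem : ∀ v : Fin 2 → G, (v 0 = 1 ∨ v 1 = 1) ↔ ∀ w ∈ T, FreeGroup.lift v w = 1 :=
    fun v => Set.ext_iff.mp hT v
  -- exponent-sum homomorphisms
  set e0 : FreeGroup (Fin 2) →* Multiplicative ℤ :=
    FreeGroup.lift (fun i => if i = 0 then Multiplicative.ofAdd 1 else 1) with he0
  set e1 : FreeGroup (Fin 2) →* Multiplicative ℤ :=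
    FreeGroup.lift (fun i => if i = 1 then Multiplicative.ofAdd 1 else 1) with he1
  have comp0 : (zpowersHom G g).comp e0 = FreeGroup.lift (fun i : Fin 2 => if i = 0 then g else 1) := by
    apply FreeGroup.ext_hom
    intro a
    fin_cases a <;> simp [he0]
  have comp1 : (zpowersHom G g).comp e1 = FreeGroup.lift (fun i : Fin 2 => if i = 1 then g else 1) := by
    apply FreeGroup.ext_hom
    intro a
    fin_cases a <;> simp [he1]
  have compE : (zpowersHom G g).comp (e0 * e1) = FreeGroup.lift (fun _ : Fin 2 => g) := by
    apply FreeGroup.ext_hom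
    intro a
    fin_cases a <;> simp [he0, he1]
  have h0 : ∀ w ∈ T, FreeGroup.lift (fun i : Fin 2 => if i = 0 then g else 1) w = 1 := by
    refine (hmem _).mp ?_
    right; simp
  have h1 : ∀ w ∈ T, FreeGroup.lift (fun i : Fin 2 => if i = 1 then g else 1) w = 1 := by
    refine (hmem _).mp ?_
    left; simp
  have key : ∀ w ∈ T, FreeGroup.lift (fun _ : Fin 2 => g) w = 1 := by
    intro w hw
    have := congrArg (fun f : FreeGroup (Fin 2) →* G => f w) compE
    simp only [MonoidHom.comp_apply, MonoidHom.mul_apply] at this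
    rw [← this, map_mul]
    have a0 := congrArg (fun f : FreeGroup (Fin 2) →* G => f w) comp0
    have a1 := congrArg (fun f : FreeGroup (Fin 2) →* G => f w) comp1
    simp only [MonoidHom.comp_apply] at a0 a1
    rw [a0, a1, h0 w hw, h1 w hw, mul_one]
  have : ((fun _ : Fin 2 => g) 0 = 1 ∨ (fun _ : Fin 2 => g) 1 = 1) := (hmem _).mpr key
  simp at this
  exact hg this
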